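/- For any policy class Π ⊆ {-1,+1}^X and any π* : X → {-1,+1}, the policy eluder dimension is at most exponential in the maximum of the star number and threshold dimension: Edim_{π*}(Π) ≤ 4^{max{Sdim_{π*}(Π), Tdim_{π*}(Π)}}. Concretely, every eluder witness sequence of length m ≥ 4^k contains a subsequence of length k that witnesses either star number ≥ k or threshold dimension ≥ k. -/

import Mathlib

/-- Eluder witness sequence of length `m` for class `P` w.r.t. base function `g`:
`π_i(x_i) ≠ g(x_i)` for all `i`, and `π_i(x_j) = g(x_j)` for all `j < i`. -/
def IsEluderSeq {X : Type*} (P : Set (X → Bool)) (g : X → Bool) (m : ℕ)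
    (x : Fin m → X) (p : Fin m → (X → Bool)) : Prop :=
  (∀ i, p i ∈ P) ∧ (∀ i, p i (x i) ≠ g (x i)) ∧
    ∀ i j : Fin m, j < i → p i (x j) = g (x j)

/-- Star witness sequence of length `m`: `π_i(x_i) ≠ g(x_i)` and
`π_i(x_j) = g(x_j)` for all `j ≠ i`. -/
def IsStarSeq {X : Type*} (P : Set (X → Bool)) (g : X → Bool) (m : ℕ)
    (x : Fin m → X) (p : Fin m → (X → Bool)) : Prop :=
  (∀ i, p i ∈ P) ∧ (∀ i, p i (x i) ≠ g (x i)) ∧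
    ∀ i j : Fin m, j ≠ i → p i (x j) = g (x j)

/-- Threshold witness sequence of length `m`: `π_i(x_j) = g(x_j)` for `j < i`
and `π_i(x_j) ≠ g(x_j)` for `j ≥ i`. -/
def IsThresholdSeq {X : Type*} (P : Set (X → Bool)) (g : X → Bool) (m : ℕ)
    (x : Fin m → X) (p : Fin m → (X → Bool)) : Prop :=
  (∀ i, p i ∈ P) ∧ (∀ i j : Fin m, j < i → p i (x j) = g (x j)) ∧
    ∀ i j : Fin m, i ≤ j → p i (x j) ≠ g (x j)

/-- Policy eluder dimension of `P` w.r.t. `g` (as an extended natural number). -/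
noncomputable def edim {X : Type*} (P : Set (X → Bool)) (g : X → Bool) : ℕ∞ :=
  ⨆ (m : ℕ) (_ : ∃ (x : Fin m → X) (p : Fin m → (X → Bool)), IsEluderSeq P g m x p), (m : ℕ∞)

/-- Star number of `P` w.r.t. `g`. -/
noncomputable def sdim {X : Type*} (P : Set (X → Bool)) (g : X → Bool) : ℕ∞ :=
  ⨆ (m : ℕ) (_ : ∃ (x : Fin m → X) (p : Fin m → (X → Bool)), IsStarSeq P g m x p), (m : ℕ∞)

/-- Threshold dimension of `P` w.r.t. `g`. -/
noncomputable def tdim {X : Type*} (P : Set (X → Bool)) (g : X → Bool) : ℕ∞ :=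
  ⨆ (m : ℕ) (_ : ∃ (x : Fin m → X) (p : Fin m → (X → Bool)), IsThresholdSeq P g m x p), (m : ℕ∞)

/-- `Edim_{π*}(Π) ≤ 4^{max{Sdim_{π*}(Π), Tdim_{π*}(Π)}}`; concretely, every
eluder witness sequence of length `m ≥ 4^k` contains a subsequence of length `k` that
witnesses either the star number or the threshold dimension. -/

lemma pivot_chain {α : Type*} [LinearOrder α] (c : α → α → Bool) :
    ∀ (n : ℕ) (S : Finset α), 2 ^ n ≤ S.card →
    ∃ (v : Fin (n+1) → α) (col : Fin n → Bool), StrictMono v ∧ (∀ i, v i ∈ S) ∧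
      ∀ (t : Fin n) (s : Fin (n+1)), t.castSucc < s → c (v t.castSucc) (v s) = col t := by
  intro n
  induction n with
  | zero =>
    intro S hS
    obtain ⟨a, ha⟩ := Finset.card_pos.mp (by simpa using hS)
    refine ⟨fun _ => a, Fin.elim0, ?_, fun _ => ha, fun t => t.elim0⟩
    intro i j h
    have hi := i.isLt; have hj := j.isLt
    have := (Fin.lt_def).mp h
    omega
  | succ n ih =>
    intro S hS
    have hq : 2 ^ (n+1) = 2 ^ n * 2 := pow_succ 2 n
    have hpos : 0 < S.card := lt_of_lt_of_le (by positivity) hS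
    have hne : S.Nonempty := Finset.card_pos.mp hpos
    set a := S.min' hne with ha
    set T := S.erase a with hTdef
    have hT : T.card = S.card - 1 := Finset.card_erase_of_mem (S.min'_mem hne)
    have hsplit : (T.filter (fun y => c a y = true)).card
        + (T.filter (fun y => ¬ (c a y = true))).card = T.card :=
      Finset.card_filter_add_card_filter_not _
    simp only [Bool.not_eq_true] at hsplit
    have hmaj : 2 ^ n ≤ (T.filter (fun y => c a y = true)).card ∨
        2 ^ n ≤ (T.filter (fun y => c a y = false)).card := by
      by_contra h
      push_neg at h
      omega
    obtain ⟨b, U, hUsub, hUcard, hUcol⟩ :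
        ∃ (b : Bool) (U : Finset α), U ⊆ T ∧ 2 ^ n ≤ U.card ∧ ∀ y ∈ U, c a y = b := by
      rcases hmaj with h | h
      · exact ⟨true, _, Finset.filter_subset _ _, h, fun y hy => (Finset.mem_filter.mp hy).2⟩
      · exact ⟨false, _, Finset.filter_subset _ _, h, fun y hy => (Finset.mem_filter.mp hy).2⟩
    obtain ⟨v', col', hv'mono, hv'mem, hv'prop⟩ := ih U hUcard
    have haltv : ∀ i, a < v' i := by
      intro i
      have hmem := Finset.mem_erase.mp (hUsub (hv'mem i))
      exact lt_of_le_of_ne (S.min'_le _ hmem.2) (Ne.symm hmem.1)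
    refine ⟨Fin.cons a v', Fin.cons b col', ?_, ?_, ?_⟩
    · rw [Fin.strictMono_iff_lt_succ]
      intro i
      refine Fin.cases ?_ (fun i => ?_) i
      · simpa using haltv 0
      · have h1 : (i.succ.castSucc : Fin (n+2)) = (i.castSucc).succ := rfl
        rw [h1, Fin.cons_succ, Fin.cons_succ]
        exact (Fin.strictMono_iff_lt_succ.mp hv'mono) i
    · intro i
      refine Fin.cases ?_ (fun i => ?_) i
      · exact S.min'_mem hne
      · rw [Fin.cons_succ]
        exact Finset.mem_of_mem_erase (hUsub (hv'mem i))
    · intro t s hts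
      induction t using Fin.cases with
      | zero =>
        have hs0 : (0 : Fin (n+2)) < s := by simpa using hts
        obtain ⟨s', rfl⟩ := Fin.eq_succ_of_ne_zero hs0.ne'
        simp only [Fin.castSucc_zero, Fin.cons_zero, Fin.cons_succ]
        exact hUcol _ (hv'mem s')
      | succ t =>
        have hs0 : (0 : Fin (n+2)) < s := lt_of_le_of_lt (Fin.zero_le _) hts
        obtain ⟨s', rfl⟩ := Fin.eq_succ_of_ne_zero hs0.ne'
        have h1 : (t.succ.castSucc : Fin (n+2)) = (t.castSucc).succ := rfl
        have hts' : t.castSucc < s' := by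
          rw [h1] at hts
          exact Fin.succ_lt_succ_iff.mp hts
        rw [h1, Fin.cons_succ, Fin.cons_succ, Fin.cons_succ]
        exact hv'prop t s' hts'

lemma mono_clique {m k : ℕ} (c : Fin m → Fin m → Bool) (hm : 2 ^ (2 * k) ≤ m) :
    ∃ (φ : Fin (k+1) → Fin m) (b : Bool), StrictMono φ ∧
      ∀ t s : Fin (k+1), t < s → c (φ t) (φ s) = b := by
  obtain ⟨v, col, hvmono, -, hvprop⟩ := pivot_chain c (2*k) Finset.univ (by simpa using hm)
  have hcard : (Finset.univ.filter (fun i => col i = true)).card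
      + (Finset.univ.filter (fun i => col i = false)).card = 2*k := by
    have := Finset.card_filter_add_card_filter_not
      (s := (Finset.univ : Finset (Fin (2*k)))) (p := fun i => col i = true)
    simpa [Bool.not_eq_true] using this
  obtain ⟨b, A, hAcard, hAcol⟩ :
      ∃ (b : Bool) (A : Finset (Fin (2*k))), A.card = k ∧ ∀ i ∈ A, col i = b := by
    rcases le_or_gt k (Finset.univ.filter (fun i => col i = true)).card with h | h
    · obtain ⟨A, hAsub, hA⟩ := Finset.exists_subset_card_eq (n := k) h
      exact ⟨true, A, hA, fun i hi => (Finset.mem_filter.mp (hAsub hi)).2⟩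
    · obtain ⟨A, hAsub, hA⟩ := Finset.exists_subset_card_eq
        (s := Finset.univ.filter (fun i => col i = false)) (n := k) (by omega)
      exact ⟨false, A, hA, fun i hi => (Finset.mem_filter.mp (hAsub hi)).2⟩
  set e := A.orderEmbOfFin hAcard with he
  set ψ : Fin (k+1) → Fin (2*k+1) :=
    Fin.snoc (fun j => (e j).castSucc) (Fin.last (2*k)) with hψ
  have hψmono : StrictMono ψ := by
    intro i j hij
    induction j using Fin.lastCases with
    | last =>
      obtain ⟨i', rfl⟩ := Fin.exists_castSucc_eq.mpr (Fin.ne_last_of_lt hij)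
      rw [hψ]
      rw [Fin.snoc_castSucc, Fin.snoc_last]
      exact Fin.castSucc_lt_last _
    | cast j' =>
      obtain ⟨i', rfl⟩ := Fin.exists_castSucc_eq.mpr
        (Fin.ne_last_of_lt hij)
      rw [hψ, Fin.snoc_castSucc, Fin.snoc_castSucc]
      have : i' < j' := by
        rwa [Fin.castSucc_lt_castSucc_iff] at hij
      exact Fin.castSucc_lt_castSucc_iff.mpr (e.strictMono this)
  refine ⟨v ∘ ψ, b, hvmono.comp hψmono, ?_⟩
  intro t s hts
  obtain ⟨t', rfl⟩ := Fin.exists_castSucc_eq.mpr (Fin.ne_last_of_lt hts)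
  have hψt : ψ t'.castSucc = (e t').castSucc := by rw [hψ, Fin.snoc_castSucc]
  have hlt : (e t').castSucc < ψ s := by
    rw [← hψt]; exact hψmono hts
  have := hvprop (e t') (ψ s) hlt
  simp only [Function.comp_apply, hψt]
  rw [this]
  exact hAcol _ (A.orderEmbOfFin_mem hAcard t')

lemma eluder_key {X : Type*} (P : Set (X → Bool)) (g : X → Bool) (m k : ℕ)
    (x : Fin m → X) (p : Fin m → (X → Bool)) (h : IsEluderSeq P g m x p)
    (hm : 2 ^ (2 * k) ≤ m) :
    ∃ φ : Fin (k+1) → Fin m, StrictMono φ ∧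
      (IsStarSeq P g (k+1) (x ∘ φ) (p ∘ φ) ∨ IsThresholdSeq P g (k+1) (x ∘ φ) (p ∘ φ)) := by
  obtain ⟨hmem, hdis, hfor⟩ := h
  obtain ⟨φ, b, hφmono, hclq⟩ :=
    mono_clique (fun a b => decide (p a (x b) = g (x b))) hm
  refine ⟨φ, hφmono, ?_⟩
  cases b with
  | true =>
    left
    refine ⟨fun i => hmem _, fun i => hdis _, ?_⟩
    intro i j hne
    rcases lt_or_gt_of_ne hne with hji | hij
    · exact hfor (φ i) (φ j) (hφmono hji)
    · exact of_decide_eq_true (hclq i j hij)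
  | false =>
    right
    refine ⟨fun i => hmem _, ?_, ?_⟩
    · intro i j hji
      exact hfor (φ i) (φ j) (hφmono hji)
    · intro i j hij
      rcases eq_or_lt_of_le hij with rfl | hlt
      · exact hdis _
      · exact of_decide_eq_false (hclq i j hlt)

lemma four_pow_eq (k : ℕ) : (4 : ℕ) ^ k = 2 ^ (2 * k) := by
  rw [show (4 : ℕ) = 2 ^ 2 from rfl, ← pow_mul]

theorem eluder_le_four_pow_max_star_threshold' {X : Type*} (P : Set (X → Bool)) (g : X → Bool) :
    (∀ k : ℕ, max (sdim P g) (tdim P g) ≤ (k : ℕ∞) → edim P g ≤ ((4 ^ k : ℕ) : ℕ∞)) ∧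
    (∀ (m k : ℕ) (x : Fin m → X) (p : Fin m → (X → Bool)),
      IsEluderSeq P g m x p → 4 ^ k ≤ m →
      ∃ φ : Fin k → Fin m, StrictMono φ ∧
        (IsStarSeq P g k (x ∘ φ) (p ∘ φ) ∨ IsThresholdSeq P g k (x ∘ φ) (p ∘ φ))) := by
  constructor
  · intro k hk
    refine iSup_le fun m => iSup_le fun hw => ?_
    obtain ⟨x, p, hseq⟩ := hw
    by_contra hgt
    have hgt' : 4 ^ k < m := by
      by_contra hle
      exact hgt (Nat.cast_le.mpr (not_lt.mp hle))
    have hm : 2 ^ (2 * k) ≤ m := by rw [← four_pow_eq]; omega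
    obtain ⟨φ, hφ, hcase⟩ := eluder_key P g m k x p hseq hm
    have hk1 : ((k + 1 : ℕ) : ℕ∞) ≤ (k : ℕ∞) := by
      rcases hcase with hstar | hthr
      · have h1 : ((k + 1 : ℕ) : ℕ∞) ≤ sdim P g :=
          le_iSup₂ (f := fun (n : ℕ) (_ : ∃ (x : Fin n → X) (p : Fin n → (X → Bool)),
            IsStarSeq P g n x p) => (n : ℕ∞)) (k + 1) ⟨x ∘ φ, p ∘ φ, hstar⟩
        exact h1.trans ((le_max_left _ _).trans hk)
      · have h1 : ((k + 1 : ℕ) : ℕ∞) ≤ tdim P g :=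
          le_iSup₂ (f := fun (n : ℕ) (_ : ∃ (x : Fin n → X) (p : Fin n → (X → Bool)),
            IsThresholdSeq P g n x p) => (n : ℕ∞)) (k + 1) ⟨x ∘ φ, p ∘ φ, hthr⟩
        exact h1.trans ((le_max_right _ _).trans hk)
    have := Nat.cast_le.mp hk1
    omega
  · intro m k x p hseq hk
    cases k with
    | zero =>
      refine ⟨Fin.elim0, fun i => i.elim0, Or.inl ⟨fun i => i.elim0, fun i => i.elim0,
        fun i => i.elim0⟩⟩
    | succ j =>
      have hm : 2 ^ (2 * j) ≤ m := by
        refine le_trans ?_ hk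
        rw [four_pow_eq]
        exact Nat.pow_le_pow_right (by norm_num) (by omega)
      exact eluder_key P g m j x p hseq hm

theorem eluder_le_four_pow_max_star_threshold {X : Type*} (P : Set (X → Bool)) (g : X → Bool) :
    (∀ k : ℕ, max (sdim P g) (tdim P g) ≤ (k : ℕ∞) → edim P g ≤ ((4 ^ k : ℕ) : ℕ∞)) ∧
    (∀ (m k : ℕ) (x : Fin m → X) (p : Fin m → (X → Bool)),
      IsEluderSeq P g m x p → 4 ^ k ≤ m →
      ∃ φ : Fin k → Fin m, StrictMono φ ∧
        (IsStarSeq P g k (x ∘ φ) (p ∘ φ) ∨ IsThresholdSeq P g k (x ∘ φ) (p ∘ φ))) :=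
  eluder_le_four_pow_max_star_threshold' P g
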